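/- Define q_1 = 1/2 and q_t = ((t-1)/(2^t - t - 1)) · q_{t-1} for t ≥ 2. Then for all positive integers t and n, c_t(n) ≤ q_t · 2^n. -/

import Mathlib

open scoped Classical

/-- `primeWeight t n` : sum over partitions of `n` into `t` distinct positive parts
`p 0 > p 1 > ⋯ > p (t-1) ≥ 1` of `(1/(t(t+1))) ∏_{i=1}^{t} ((i+1)/i)^{p_i}`. -/
noncomputable def primeWeight (t n : ℕ) : ℝ :=
  ∑ p ∈ (Fintype.piFinset (fun _ : Fin t => Finset.range (n + 1))).filter
      (fun p => (∀ i j : Fin t, i < j → p j < p i) ∧ (∀ i, 1 ≤ p i) ∧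
        ∑ i, p i = n),
    (1 / ((t : ℝ) * ((t : ℝ) + 1))) *
      ∏ i : Fin t, ((((i : ℕ) : ℝ) + 2) / (((i : ℕ) : ℝ) + 1)) ^ p i

/-- `qseq 1 = 1/2` and `qseq t = ((t-1)/(2^t - t - 1)) * qseq (t-1)` for `t ≥ 2`. -/
noncomputable def qseq : ℕ → ℝ
  | 0 => 0
  | 1 => 1 / 2
  | t + 2 => (((t : ℝ) + 1) / (2 ^ (t + 2) - ((t : ℝ) + 2) - 1)) * qseq (t + 1)

open Finset

section Aux

lemma tele1 (f : ℕ → ℤ) (m : ℕ) :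
    ∑ k ∈ range m, ((k : ℤ) + 1) * (f k - f (k + 1)) = (∑ k ∈ range m, f k) - m * f m := by
  induction m with
  | zero => simp
  | succ m ih =>
    rw [Finset.sum_range_succ, ih, Finset.sum_range_succ]
    push_cast
    ring

lemma tele2 (f : ℕ → ℤ) (m j : ℕ) :
    ∑ k ∈ Ico m (m + j), (f k - f (k + 1)) = f m - f (m + j) := by
  induction j with
  | zero => simp
  | succ j ih =>
    rw [show m + (j+1) = (m+j) + 1 from rfl, Finset.sum_Ico_succ_top (Nat.le_add_right m j), ih]
    ring

lemma pow_ge (k : ℕ) : k + 4 ≤ 2 ^ (k + 2) := by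
  induction k with
  | zero => norm_num
  | succ k ih =>
    have h2 : 2 ^ (k + 1 + 2) = 2 ^ (k+2) + 2 ^ (k+2) := by ring
    omega

lemma den_pos (k : ℕ) : (0:ℝ) < 2 ^ (k + 2) - ((k : ℝ) + 3) := by
  have h := pow_ge k
  have h2 : ((k : ℝ) + 4) ≤ 2 ^ (k + 2) := by exact_mod_cast h
  linarith

lemma geom_bound (r : ℝ) (hr0 : 0 ≤ r) (hr1 : r < 1) (n : ℕ) :
    ∑ k ∈ Icc 1 n, r ^ k ≤ r / (1 - r) := by
  have h1r : (0:ℝ) < 1 - r := by linarith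
  have hins : range (n + 1) = insert 0 (Icc 1 n) := by
    ext k; simp [Nat.lt_succ_iff]; omega
  have h0 : (0:ℕ) ∉ Icc 1 n := by simp
  have h2 : (1:ℝ) + ∑ k ∈ Icc 1 n, r ^ k = ∑ k ∈ range (n + 1), r ^ k := by
    rw [hins, Finset.sum_insert h0]; simp
  have h3 : ∑ k ∈ range (n + 1), r ^ k = r * ∑ k ∈ range n, r ^ k + 1 := geom_sum_succ
  have h4 : ∑ k ∈ range n, r ^ k ≤ 1 / (1 - r) := by
    rw [geom_sum_eq hr1.ne n]
    have h5 : (r ^ n - 1) / (r - 1) = (1 - r ^ n) / (1 - r) := by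
      rw [div_eq_div_iff (by intro h; linarith) h1r.ne']; ring
    rw [h5, div_le_div_iff₀ h1r h1r]
    have : (0:ℝ) ≤ r ^ n := pow_nonneg hr0 n
    nlinarith
  have h6 : ∑ k ∈ Icc 1 n, r ^ k = r * ∑ k ∈ range n, r ^ k := by linarith
  rw [h6]
  have h7 : r * ∑ k ∈ range n, r ^ k ≤ r * (1 / (1 - r)) :=
    mul_le_mul_of_nonneg_left h4 hr0
  calc r * ∑ k ∈ range n, r ^ k ≤ r * (1 / (1 - r)) := h7
    _ = r / (1 - r) := by ring

lemma qseq_formula (t' : ℕ) :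
    qseq (t' + 1) = (1 / (((t' : ℝ) + 1) * ((t' : ℝ) + 2))) *
      ∏ i : Fin t', ((((i : ℕ) : ℝ) + 3) / (2 ^ ((i : ℕ) + 2) - (((i : ℕ) : ℝ) + 3))) := by
  induction t' with
  | zero => norm_num [qseq]
  | succ t ih =>
    have hq : qseq (t + 2) = (((t : ℝ) + 1) / (2 ^ (t + 2) - ((t : ℝ) + 2) - 1)) * qseq (t + 1) := rfl
    rw [show t + 1 + 1 = t + 2 from rfl, hq, ih, Fin.prod_univ_castSucc]
    simp only [Fin.coe_castSucc, Fin.val_last]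
    have hd := den_pos t
    have h1 : ((t:ℝ) + 1) ≠ 0 := by positivity
    have h2 : ((t:ℝ) + 2) ≠ 0 := by positivity
    have h3 : ((t:ℝ) + 3) ≠ 0 := by positivity
    have h4 : (2:ℝ) ^ (t + 2) - ((t:ℝ) + 3) ≠ 0 := ne_of_gt hd
    have h5 : (2:ℝ) ^ (t + 2) - ((t:ℝ) + 2) - 1 ≠ 0 := by
      intro h; apply h4; linarith
    push_cast
    have key : (((t:ℝ) + 1) / (2 ^ (t + 2) - ((t:ℝ) + 2) - 1)) * (1 / (((t:ℝ) + 1) * ((t:ℝ) + 2)))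
        = (1 / ((((t:ℝ)+1) + 1) * (((t:ℝ)+1) + 2))) * (((t:ℝ) + 3) / (2 ^ (t + 2) - ((t:ℝ) + 3))) := by
      field_simp
      ring
    linear_combination (∏ i : Fin t, ((((i:ℕ):ℝ) + 3) / (2 ^ ((i:ℕ) + 2) - (((i:ℕ):ℝ) + 3)))) * key

def extF (T : ℕ) (p : Fin T → ℕ) (k : ℕ) : ℕ := if h : k < T then p ⟨k, h⟩ else 0

def phiF (T : ℕ) (p : Fin T → ℕ) (i : Fin T) : ℕ := p i - extF T p ((i : ℕ) + 1)

lemma extF_eq {T : ℕ} (p : Fin T → ℕ) (i : Fin T) : extF T p (i : ℕ) = p i := by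
  simp [extF, i.isLt]

lemma extF_top {T : ℕ} (p : Fin T → ℕ) {k : ℕ} (hk : T ≤ k) : extF T p k = 0 := by
  simp [extF, Nat.not_lt.mpr hk]

lemma extF_lt {T : ℕ} {p : Fin T → ℕ} (hdec : ∀ i j : Fin T, i < j → p j < p i)
    (hpos : ∀ i, 1 ≤ p i) {k : ℕ} (hk : k < T) : extF T p (k + 1) < extF T p k := by
  rw [show k = ((⟨k, hk⟩ : Fin T) : ℕ) from rfl, extF_eq]
  by_cases h : k + 1 < T
  · rw [show k + 1 = ((⟨k+1, h⟩ : Fin T) : ℕ) from rfl, extF_eq]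
    exact hdec ⟨k, hk⟩ ⟨k+1, h⟩ (by simp [Fin.lt_def])
  · rw [extF_top p (Nat.not_lt.mp h)]
    exact hpos _

lemma extF_le {T : ℕ} {p : Fin T → ℕ} (hdec : ∀ i j : Fin T, i < j → p j < p i)
    (hpos : ∀ i, 1 ≤ p i) (k : ℕ) : extF T p (k + 1) ≤ extF T p k := by
  by_cases hk : k < T
  · exact (extF_lt hdec hpos hk).le
  · rw [extF_top p (Nat.not_lt.mp hk), extF_top p (by omega)]

lemma phiF_pos {T : ℕ} {p : Fin T → ℕ} (hdec : ∀ i j : Fin T, i < j → p j < p i)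
    (hpos : ∀ i, 1 ≤ p i) (i : Fin T) : 1 ≤ phiF T p i := by
  have h := extF_lt hdec hpos i.isLt
  rw [extF_eq] at h
  rw [phiF]
  omega

lemma phiF_le {T : ℕ} (p : Fin T → ℕ) (i : Fin T) : phiF T p i ≤ p i := Nat.sub_le _ _

lemma phiF_cast {T : ℕ} {p : Fin T → ℕ} (hdec : ∀ i j : Fin T, i < j → p j < p i)
    (hpos : ∀ i, 1 ≤ p i) (i : Fin T) :
    (phiF T p i : ℤ) = (extF T p (i : ℕ) : ℤ) - (extF T p ((i : ℕ) + 1) : ℤ) := by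
  have h := extF_lt hdec hpos i.isLt
  rw [extF_eq] at h ⊢
  rw [phiF, Nat.cast_sub h.le]

lemma phiF_sum {T n : ℕ} {p : Fin T → ℕ} (hdec : ∀ i j : Fin T, i < j → p j < p i)
    (hpos : ∀ i, 1 ≤ p i) (hsum : ∑ i, p i = n) :
    ∑ i : Fin T, ((i : ℕ) + 1) * phiF T p i = n := by
  have main : (↑(∑ i : Fin T, ((i : ℕ) + 1) * phiF T p i) : ℤ) = (n : ℤ) := by
    rw [Nat.cast_sum]
    calc ∑ i : Fin T, (↑(((i : ℕ) + 1) * phiF T p i) : ℤ)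
        = ∑ i : Fin T, (((i : ℕ) : ℤ) + 1) * ((extF T p (i : ℕ) : ℤ) - (extF T p ((i : ℕ) + 1) : ℤ)) := by
          refine Finset.sum_congr rfl fun i _ => ?_
          rw [Nat.cast_mul, phiF_cast hdec hpos i]
          push_cast
          ring
      _ = ∑ k ∈ range T, ((k : ℤ) + 1) * ((extF T p k : ℤ) - (extF T p (k + 1) : ℤ)) :=
          Fin.sum_univ_eq_sum_range (fun k => ((k : ℤ) + 1) * ((extF T p k : ℤ) - (extF T p (k + 1) : ℤ))) T
      _ = (∑ k ∈ range T, (extF T p k : ℤ)) - T * (extF T p T : ℤ) := tele1 _ T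
      _ = ∑ k ∈ range T, (extF T p k : ℤ) := by rw [extF_top p le_rfl]; push_cast; ring
      _ = ∑ i : Fin T, (extF T p (i : ℕ) : ℤ) := (Fin.sum_univ_eq_sum_range (fun k => (extF T p k : ℤ)) T).symm
      _ = ∑ i : Fin T, (p i : ℤ) := by
          refine Finset.sum_congr rfl fun i _ => ?_
          rw [extF_eq]
      _ = (n : ℤ) := by rw [← Nat.cast_sum, hsum]
  exact_mod_cast main

lemma phiF_inj {T : ℕ} {p p' : Fin T → ℕ}
    (hdec : ∀ i j : Fin T, i < j → p j < p i) (hpos : ∀ i, 1 ≤ p i)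
    (hdec' : ∀ i j : Fin T, i < j → p' j < p' i) (hpos' : ∀ i, 1 ≤ p' i)
    (h : phiF T p = phiF T p') : p = p' := by
  have key : ∀ (q : Fin T → ℕ), (∀ i j : Fin T, i < j → q j < q i) → (∀ i, 1 ≤ q i) →
      ∀ m, m ≤ T → (extF T q m : ℤ) = ∑ k ∈ Ico m T, ((extF T q k : ℤ) - (extF T q (k + 1) : ℤ)) := by
    intro q hd hp m hm
    have := tele2 (fun k => (extF T q k : ℤ)) m (T - m)
    rw [show m + (T - m) = T by omega] at this
    rw [this, extF_top q le_rfl]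
    push_cast
    ring
  have hphiN : ∀ k : ℕ, (extF T p k : ℤ) - (extF T p (k + 1) : ℤ)
      = (extF T p' k : ℤ) - (extF T p' (k + 1) : ℤ) := by
    intro k
    by_cases hk : k < T
    · have h1 := phiF_cast hdec hpos ⟨k, hk⟩
      have h2 := phiF_cast hdec' hpos' ⟨k, hk⟩
      simp only [] at h1 h2
      rw [← h1, ← h2, h]
    · rw [extF_top p (by omega), extF_top p (by omega), extF_top p' (by omega), extF_top p' (by omega)]
  funext i
  have e1 := key p hdec hpos (i : ℕ) i.isLt.le
  have e2 := key p' hdec' hpos' (i : ℕ) i.isLt.le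
  rw [extF_eq] at e1 e2
  have : (p i : ℤ) = (p' i : ℤ) := by
    rw [e1, e2]
    exact Finset.sum_congr rfl fun k _ => hphiN k
  exact_mod_cast this

lemma phiF_weight {T : ℕ} {p : Fin T → ℕ} (hdec : ∀ i j : Fin T, i < j → p j < p i)
    (hpos : ∀ i, 1 ≤ p i) :
    ∏ i : Fin T, ((((i : ℕ) : ℝ) + 2) / (((i : ℕ) : ℝ) + 1)) ^ p i
      = ∏ i : Fin T, (((i : ℕ) : ℝ) + 2) ^ phiF T p i := by
  have hle : ∀ i : Fin T, extF T p ((i : ℕ) + 1) ≤ p i := by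
    intro i
    have h := extF_le hdec hpos (i : ℕ)
    rwa [extF_eq] at h
  have shift : ∏ i : Fin T, (((i : ℕ) : ℝ) + 2) ^ extF T p ((i : ℕ) + 1)
      = ∏ i : Fin T, (((i : ℕ) : ℝ) + 1) ^ p i := by
    set f0 : ℕ → ℝ := fun m => ((m : ℝ) + 1) ^ extF T p m with hf0
    have h1 : ∏ i : Fin T, (((i : ℕ) : ℝ) + 2) ^ extF T p ((i : ℕ) + 1)
        = ∏ k ∈ range T, f0 (k + 1) := by
      rw [Fin.prod_univ_eq_prod_range (fun k => ((k : ℝ) + 2) ^ extF T p (k + 1)) T]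
      refine Finset.prod_congr rfl fun k _ => ?_
      simp only [hf0]
      push_cast
      ring_nf
    have h2 : ∏ k ∈ range (T + 1), f0 k = (∏ k ∈ range T, f0 (k + 1)) * f0 0 :=
      Finset.prod_range_succ' f0 T
    have h3 : f0 0 = 1 := by simp [hf0]
    have h4 : f0 T = 1 := by simp [hf0, extF_top p le_rfl]
    have h6 : ∏ k ∈ range T, f0 k = ∏ i : Fin T, (((i : ℕ) : ℝ) + 1) ^ p i := by
      rw [← Fin.prod_univ_eq_prod_range f0 T]
      refine Finset.prod_congr rfl fun i _ => ?_
      simp only [hf0]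
      rw [extF_eq]
    calc ∏ i : Fin T, (((i : ℕ) : ℝ) + 2) ^ extF T p ((i : ℕ) + 1)
        = ∏ k ∈ range T, f0 (k + 1) := h1
      _ = (∏ k ∈ range T, f0 (k + 1)) * f0 0 := by rw [h3, mul_one]
      _ = ∏ k ∈ range (T + 1), f0 k := h2.symm
      _ = (∏ k ∈ range T, f0 k) * f0 T := Finset.prod_range_succ f0 T
      _ = ∏ k ∈ range T, f0 k := by rw [h4, mul_one]
      _ = ∏ i : Fin T, (((i : ℕ) : ℝ) + 1) ^ p i := h6
  have step1 : ∀ i : Fin T, (((i : ℕ) : ℝ) + 2) ^ phiF T p i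
      = (((i : ℕ) : ℝ) + 2) ^ p i / (((i : ℕ) : ℝ) + 2) ^ extF T p ((i : ℕ) + 1) := by
    intro i
    rw [phiF]
    exact pow_sub₀ _ (by positivity) (hle i)
  calc ∏ i : Fin T, ((((i : ℕ) : ℝ) + 2) / (((i : ℕ) : ℝ) + 1)) ^ p i
      = ∏ i : Fin T, ((((i : ℕ) : ℝ) + 2) ^ p i / (((i : ℕ) : ℝ) + 1) ^ p i) :=
        Finset.prod_congr rfl fun i _ => div_pow _ _ _
    _ = (∏ i : Fin T, (((i : ℕ) : ℝ) + 2) ^ p i) / ∏ i : Fin T, (((i : ℕ) : ℝ) + 1) ^ p i :=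
        Finset.prod_div_distrib _ _
    _ = (∏ i : Fin T, (((i : ℕ) : ℝ) + 2) ^ p i) / ∏ i : Fin T, (((i : ℕ) : ℝ) + 2) ^ extF T p ((i : ℕ) + 1) := by
        rw [shift]
    _ = ∏ i : Fin T, ((((i : ℕ) : ℝ) + 2) ^ p i / (((i : ℕ) : ℝ) + 2) ^ extF T p ((i : ℕ) + 1)) :=
        (Finset.prod_div_distrib _ _).symm
    _ = ∏ i : Fin T, (((i : ℕ) : ℝ) + 2) ^ phiF T p i :=
        Finset.prod_congr rfl fun i _ => (step1 i).symm

lemma weight_split {t' n : ℕ} {g : Fin (t'+1) → ℕ}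
    (hsum : ∑ i : Fin (t'+1), ((i : ℕ) + 1) * g i = n) :
    ∏ i : Fin (t'+1), (((i : ℕ) : ℝ) + 2) ^ g i
      = 2 ^ n * ∏ i : Fin t', ((((i : ℕ) : ℝ) + 3) / 2 ^ ((i : ℕ) + 2)) ^ g i.succ := by
  have h1 : ∏ i : Fin (t'+1), (((i : ℕ) : ℝ) + 2) ^ g i
      = (∏ i : Fin (t'+1), ((2:ℝ) ^ ((i : ℕ) + 1)) ^ g i)
        * ∏ i : Fin (t'+1), ((((i : ℕ) : ℝ) + 2) / 2 ^ ((i : ℕ) + 1)) ^ g i := by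
    rw [← Finset.prod_mul_distrib]
    refine Finset.prod_congr rfl fun i _ => ?_
    rw [← mul_pow]
    congr 1
    field_simp
  have h2 : ∏ i : Fin (t'+1), ((2:ℝ) ^ ((i : ℕ) + 1)) ^ g i = 2 ^ n := by
    have e : ∀ i : Fin (t'+1), ((2:ℝ) ^ ((i : ℕ) + 1)) ^ g i = 2 ^ (((i : ℕ) + 1) * g i) :=
      fun i => (pow_mul 2 _ _).symm
    rw [Finset.prod_congr rfl fun i _ => e i, Finset.prod_pow_eq_pow_sum, hsum]
  have h3 : ∏ i : Fin (t'+1), ((((i : ℕ) : ℝ) + 2) / 2 ^ ((i : ℕ) + 1)) ^ g i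
      = ∏ i : Fin t', ((((i : ℕ) : ℝ) + 3) / 2 ^ ((i : ℕ) + 2)) ^ g i.succ := by
    rw [Fin.prod_univ_succ]
    have h0 : ((((0 : Fin (t'+1)) : ℕ) : ℝ) + 2) / 2 ^ (((0 : Fin (t'+1)) : ℕ) + 1) = 1 := by
      norm_num
    rw [h0, one_pow, one_mul]
    refine Finset.prod_congr rfl fun i _ => ?_
    have hv : ((i.succ : Fin (t'+1)) : ℕ) = (i : ℕ) + 1 := Fin.val_succ i
    rw [hv]
    push_cast
    ring_nf
  rw [h1, h2, h3]

end Aux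

theorem stmt_2 (t n : ℕ) (ht : 1 ≤ t) (hn : 1 ≤ n) :
    primeWeight t n ≤ qseq t * 2 ^ n := by
  obtain ⟨t', rfl⟩ : ∃ t', t = t' + 1 := ⟨t - 1, by omega⟩
  classical
  have hc0 : (0:ℝ) ≤ 1 / (((t'+1 : ℕ) : ℝ) * (((t'+1 : ℕ) : ℝ) + 1)) := by positivity
  -- the target set S
  set S := (Fintype.piFinset (fun _ : Fin (t'+1) => Finset.range (n + 1))).filter
      (fun g => (∀ i, 1 ≤ g i) ∧ ∑ i : Fin (t'+1), ((i : ℕ) + 1) * g i = n) with hSdef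
  set A := (Fintype.piFinset (fun _ : Fin (t'+1) => Finset.range (n + 1))).filter
      (fun p => (∀ i j : Fin (t'+1), i < j → p j < p i) ∧ (∀ i, 1 ≤ p i) ∧
        ∑ i, p i = n) with hAdef
  set B := ∏ i : Fin t', ((((i : ℕ) : ℝ) + 3) / (2 ^ ((i : ℕ) + 2) - (((i : ℕ) : ℝ) + 3))) with hBdef
  have hX : ∑ p ∈ A, ∏ i : Fin (t'+1), ((((i : ℕ) : ℝ) + 2) / (((i : ℕ) : ℝ) + 1)) ^ p i
      ≤ 2 ^ n * B := by
    have hmem : ∀ p ∈ A, (∀ i j : Fin (t'+1), i < j → p j < p i) ∧ (∀ i, 1 ≤ p i) ∧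
        (∑ i, p i = n) ∧ ∀ i, p i ≤ n := by
      intro p hp
      rw [hAdef, Finset.mem_filter, Fintype.mem_piFinset] at hp
      refine ⟨hp.2.1, hp.2.2.1, hp.2.2.2, fun i => ?_⟩
      have := hp.1 i
      rw [Finset.mem_range] at this
      omega
    have hSmem : ∀ g ∈ S, (∀ i, 1 ≤ g i) ∧ (∑ i : Fin (t'+1), ((i : ℕ) + 1) * g i = n) ∧
        ∀ i, g i ≤ n := by
      intro g hg
      rw [hSdef, Finset.mem_filter, Fintype.mem_piFinset] at hg
      refine ⟨hg.2.1, hg.2.2, fun i => ?_⟩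
      have := hg.1 i
      rw [Finset.mem_range] at this
      omega
    have key1 : ∑ p ∈ A, ∏ i : Fin (t'+1), ((((i : ℕ) : ℝ) + 2) / (((i : ℕ) : ℝ) + 1)) ^ p i
        ≤ ∑ g ∈ S, ∏ i : Fin (t'+1), (((i : ℕ) : ℝ) + 2) ^ g i := by
      have hinj : ∀ p ∈ A, ∀ p' ∈ A, phiF (t'+1) p = phiF (t'+1) p' → p = p' := by
        intro p hp p' hp' h
        obtain ⟨hd, hq, _, _⟩ := hmem p hp
        obtain ⟨hd', hq', _, _⟩ := hmem p' hp'
        exact phiF_inj hd hq hd' hq' h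
      have e1 : ∑ q ∈ A.image (phiF (t'+1)), ∏ i : Fin (t'+1), (((i : ℕ) : ℝ) + 2) ^ q i
          = ∑ p ∈ A, ∏ i : Fin (t'+1), (((i : ℕ) : ℝ) + 2) ^ phiF (t'+1) p i :=
        Finset.sum_image hinj
      have hsub : A.image (phiF (t'+1)) ⊆ S := by
        intro q hq
        obtain ⟨p, hp, rfl⟩ := Finset.mem_image.mp hq
        obtain ⟨hd, hq', hs, hb⟩ := hmem p hp
        rw [hSdef, Finset.mem_filter, Fintype.mem_piFinset]
        refine ⟨fun i => ?_, phiF_pos hd hq', phiF_sum hd hq' hs⟩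
        rw [Finset.mem_range]
        have := phiF_le p i
        have := hb i
        omega
      calc ∑ p ∈ A, ∏ i : Fin (t'+1), ((((i : ℕ) : ℝ) + 2) / (((i : ℕ) : ℝ) + 1)) ^ p i
          = ∑ p ∈ A, ∏ i : Fin (t'+1), (((i : ℕ) : ℝ) + 2) ^ phiF (t'+1) p i := by
            refine Finset.sum_congr rfl fun p hp => ?_
            obtain ⟨hd, hq', _, _⟩ := hmem p hp
            exact phiF_weight hd hq'
        _ = ∑ q ∈ A.image (phiF (t'+1)), ∏ i : Fin (t'+1), (((i : ℕ) : ℝ) + 2) ^ q i := e1.symm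
        _ ≤ ∑ g ∈ S, ∏ i : Fin (t'+1), (((i : ℕ) : ℝ) + 2) ^ g i := by
            refine Finset.sum_le_sum_of_subset_of_nonneg hsub fun g _ _ => ?_
            positivity
    have key2 : ∑ g ∈ S, ∏ i : Fin (t'+1), (((i : ℕ) : ℝ) + 2) ^ g i
        = 2 ^ n * ∑ g ∈ S, ∏ i : Fin t', ((((i : ℕ) : ℝ) + 3) / 2 ^ ((i : ℕ) + 2)) ^ g i.succ := by
      rw [Finset.mul_sum]
      refine Finset.sum_congr rfl fun g hg => ?_
      exact weight_split (hSmem g hg).2.1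
    have key3 : ∑ g ∈ S, ∏ i : Fin t', ((((i : ℕ) : ℝ) + 3) / 2 ^ ((i : ℕ) + 2)) ^ g i.succ
        ≤ ∑ h ∈ Fintype.piFinset (fun _ : Fin t' => Finset.Icc 1 n),
            ∏ i : Fin t', ((((i : ℕ) : ℝ) + 3) / 2 ^ ((i : ℕ) + 2)) ^ h i := by
      have hinj2 : ∀ g ∈ S, ∀ g' ∈ S,
          (fun (i : Fin t') => g i.succ) = (fun (i : Fin t') => g' i.succ) → g = g' := by
        intro g hg g' hg' h
        have hval : ∀ i : Fin t', g i.succ = g' i.succ := fun i => congrFun h i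
        have hs1 := (hSmem g hg).2.1
        have hs2 := (hSmem g' hg').2.1
        rw [Fin.sum_univ_succ] at hs1 hs2
        have hEq : ∑ i : Fin t', (((i.succ : Fin (t'+1)) : ℕ) + 1) * g i.succ
            = ∑ i : Fin t', (((i.succ : Fin (t'+1)) : ℕ) + 1) * g' i.succ :=
          Finset.sum_congr rfl fun i _ => by rw [hval i]
        have h0 : g 0 = g' 0 := by
          simp only [Fin.val_zero] at hs1 hs2
          omega
        funext i
        refine Fin.cases h0 (fun j => hval j) i
      have e2 : ∑ h ∈ S.image (fun g (i : Fin t') => g i.succ),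
          ∏ i : Fin t', ((((i : ℕ) : ℝ) + 3) / 2 ^ ((i : ℕ) + 2)) ^ h i
          = ∑ g ∈ S, ∏ i : Fin t', ((((i : ℕ) : ℝ) + 3) / 2 ^ ((i : ℕ) + 2)) ^ g i.succ :=
        Finset.sum_image hinj2
      have hsub2 : S.image (fun g (i : Fin t') => g i.succ)
          ⊆ Fintype.piFinset (fun _ : Fin t' => Finset.Icc 1 n) := by
        intro h hh
        obtain ⟨g, hg, rfl⟩ := Finset.mem_image.mp hh
        obtain ⟨hp1, _, hb⟩ := hSmem g hg
        rw [Fintype.mem_piFinset]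
        intro i
        rw [Finset.mem_Icc]
        exact ⟨hp1 _, hb _⟩
      rw [← e2]
      refine Finset.sum_le_sum_of_subset_of_nonneg hsub2 fun h _ _ => ?_
      positivity
    have key4 : ∑ h ∈ Fintype.piFinset (fun _ : Fin t' => Finset.Icc 1 n),
        ∏ i : Fin t', ((((i : ℕ) : ℝ) + 3) / 2 ^ ((i : ℕ) + 2)) ^ h i
        = ∏ i : Fin t', ∑ k ∈ Finset.Icc 1 n, ((((i : ℕ) : ℝ) + 3) / 2 ^ ((i : ℕ) + 2)) ^ k :=
      (Finset.prod_univ_sum _ _).symm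
    have key5 : ∏ i : Fin t', ∑ k ∈ Finset.Icc 1 n, ((((i : ℕ) : ℝ) + 3) / 2 ^ ((i : ℕ) + 2)) ^ k
        ≤ B := by
      rw [hBdef]
      refine Finset.prod_le_prod (fun i _ => ?_) (fun i _ => ?_)
      · refine Finset.sum_nonneg fun k _ => ?_
        positivity
      · have hpow : (0:ℝ) < 2 ^ ((i : ℕ) + 2) := by positivity
        have hd := den_pos (i : ℕ)
        have hr0 : (0:ℝ) ≤ (((i : ℕ) : ℝ) + 3) / 2 ^ ((i : ℕ) + 2) := by positivity
        have hr1 : (((i : ℕ) : ℝ) + 3) / 2 ^ ((i : ℕ) + 2) < 1 := by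
          rw [div_lt_one hpow]
          linarith
        have hgb := geom_bound _ hr0 hr1 n
        have heq : ((((i : ℕ) : ℝ) + 3) / 2 ^ ((i : ℕ) + 2)) / (1 - (((i : ℕ) : ℝ) + 3) / 2 ^ ((i : ℕ) + 2))
            = (((i : ℕ) : ℝ) + 3) / (2 ^ ((i : ℕ) + 2) - (((i : ℕ) : ℝ) + 3)) := by
          rw [div_eq_div_iff (by linarith [hr1] : (0:ℝ) < 1 - (((i : ℕ) : ℝ) + 3) / 2 ^ ((i : ℕ) + 2)).ne' hd.ne']
          field_simp
        rw [heq] at hgb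
        exact hgb
    calc ∑ p ∈ A, ∏ i : Fin (t'+1), ((((i : ℕ) : ℝ) + 2) / (((i : ℕ) : ℝ) + 1)) ^ p i
        ≤ ∑ g ∈ S, ∏ i : Fin (t'+1), (((i : ℕ) : ℝ) + 2) ^ g i := key1
      _ = 2 ^ n * ∑ g ∈ S, ∏ i : Fin t', ((((i : ℕ) : ℝ) + 3) / 2 ^ ((i : ℕ) + 2)) ^ g i.succ := key2
      _ ≤ 2 ^ n * B := by
          refine mul_le_mul_of_nonneg_left ?_ (by positivity)
          exact le_trans key3 (le_of_eq key4 |>.trans key5)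
  rw [primeWeight, ← Finset.mul_sum]
  calc (1 / (((t'+1 : ℕ) : ℝ) * (((t'+1 : ℕ) : ℝ) + 1))) *
        ∑ p ∈ A, ∏ i : Fin (t'+1), ((((i : ℕ) : ℝ) + 2) / (((i : ℕ) : ℝ) + 1)) ^ p i
      ≤ (1 / (((t'+1 : ℕ) : ℝ) * (((t'+1 : ℕ) : ℝ) + 1))) * (2 ^ n * B) :=
        mul_le_mul_of_nonneg_left hX hc0
    _ = qseq (t'+1) * 2 ^ n := by
        rw [qseq_formula, ← hBdef]
        push_cast
        ring
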